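/- The number of edges of a minimum spanning tree M not contained in a spanning tree T equals the number of edges of T not contained in M, and every edge of T \ M participates in a violated swap constraint (a swap (e,f) with w(f) < w(e)). -/

import Mathlib

open SimpleGraph
open scoped Classical

/-- `T` is a spanning tree of `G`. -/
def IsSpanningTree {V : Type*} (G T : SimpleGraph V) : Prop :=
  T ≤ G ∧ T.IsTree

/-- `(e, f)` is a swap for the spanning tree `T` of `G`. -/
def IsSwap {V : Type*} (G T : SimpleGraph V) (e f : Sym2 V) : Prop :=
  e ∈ T.edgeSet ∧ f ∈ G.edgeSet ∧ f ∉ T.edgeSet ∧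
    IsSpanningTree G (SimpleGraph.fromEdgeSet ((insert f T.edgeSet) \ {e}))

open scoped Classical in
/-- Total weight of (the edges of) a graph. -/
noncomputable def treeWeight {V : Type*} [Fintype V] (T : SimpleGraph V)
    (w : Sym2 V → ℝ) : ℝ :=
  ∑ e ∈ T.edgeFinset, w e

section Aux

/-- Walking in `G`, either the endpoints remain reachable after deleting `s(u,v)`,
or both endpoints reach `u` or `v` in the deleted graph. -/
lemma walk_side_aux {V : Type*} {G : SimpleGraph V} (u v : V) {x y : V} (p : G.Walk x y) :
    (G.deleteEdges {s(u,v)}).Reachable x y ∨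
      (((G.deleteEdges {s(u,v)}).Reachable x u ∨ (G.deleteEdges {s(u,v)}).Reachable x v) ∧
       ((G.deleteEdges {s(u,v)}).Reachable y u ∨ (G.deleteEdges {s(u,v)}).Reachable y v)) := by
  set H := G.deleteEdges {s(u,v)} with hH
  induction p with
  | nil => exact Or.inl (Reachable.refl _)
  | @cons x x' y h q ih =>
    by_cases hex : s(x, x') = s(u, v)
    · have hx : H.Reachable x u ∨ H.Reachable x v := by
        rw [Sym2.eq_iff] at hex
        rcases hex with ⟨rfl, rfl⟩ | ⟨rfl, rfl⟩
        · exact Or.inl (Reachable.refl _)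
        · exact Or.inr (Reachable.refl _)
      have hx' : H.Reachable x' u ∨ H.Reachable x' v := by
        rw [Sym2.eq_iff] at hex
        rcases hex with ⟨rfl, rfl⟩ | ⟨rfl, rfl⟩
        · exact Or.inr (Reachable.refl _)
        · exact Or.inl (Reachable.refl _)
      rcases ih with hr | ⟨_, hy⟩
      · refine Or.inr ⟨hx, ?_⟩
        rcases hx' with h1 | h1
        · exact Or.inl (hr.symm.trans h1)
        · exact Or.inr (hr.symm.trans h1)
      · exact Or.inr ⟨hx, hy⟩
    · have hadj : H.Adj x x' := by
        rw [hH, deleteEdges_adj]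
        exact ⟨h, by simpa using hex⟩
      rcases ih with hr | ⟨hx', hy⟩
      · exact Or.inl (hadj.reachable.trans hr)
      · refine Or.inr ⟨?_, hy⟩
        rcases hx' with h1 | h1
        · exact Or.inl (hadj.reachable.trans h1)
        · exact Or.inr (hadj.reachable.trans h1)

/-- In a connected graph, after removing one edge every vertex still reaches one
of its endpoints. -/
lemma all_side_aux {V : Type*} {G : SimpleGraph V} (hc : G.Connected) (u v : V) (x : V) :
    (G.deleteEdges {s(u,v)}).Reachable x u ∨ (G.deleteEdges {s(u,v)}).Reachable x v := by
  obtain ⟨p⟩ := hc x u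
  rcases walk_side_aux u v p with hr | ⟨hx, _⟩
  · exact Or.inl hr
  · exact hx

/-- Crossing edge lemma: a walk from the `u`-side to the `v`-side contains a
crossing edge. -/
lemma exists_cross_aux {V : Type*} {M H : SimpleGraph V} {u v : V}
    (hnr : ¬ H.Reachable u v) (hside : ∀ z, H.Reachable u z ∨ H.Reachable v z) :
    ∀ {x y : V} (p : M.Walk x y), H.Reachable u x → H.Reachable v y →
      ∃ a b : V, M.Adj a b ∧ H.Reachable u a ∧ H.Reachable v b ∧ s(a,b) ∈ p.edges := by
  intro x y p
  induction p with
  | nil => exact fun hx hy => absurd (hx.trans hy.symm) hnr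
  | @cons x x' y h q ih =>
    intro hx hy
    by_cases hx' : H.Reachable u x'
    · obtain ⟨a, b, hab, ha, hb, hmem⟩ := ih hx' hy
      exact ⟨a, b, hab, ha, hb, by simp [hmem]⟩
    · have hvx' : H.Reachable v x' := (hside x').resolve_left hx'
      exact ⟨x, x', h, hx, hvx', by simp⟩

/-- In an acyclic graph, removing an edge of a path disconnects its endpoints. -/
lemma not_reachable_delete_of_mem_path_aux {V : Type*} {M : SimpleGraph V}
    (hac : M.IsAcyclic) {u v : V} {p : M.Walk u v} (hp : p.IsPath) {f : Sym2 V}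
    (hf : f ∈ p.edges) : ¬ (M.deleteEdges {f}).Reachable u v := by
  rintro ⟨q⟩
  have hq : ∀ g ∈ q.edges, g ∈ M.edgeSet := by
    intro g hg
    have := q.edges_subset_edgeSet hg
    rw [edgeSet_deleteEdges] at this
    exact this.1
  have hfq : f ∉ q.edges := by
    intro hfq
    have := q.edges_subset_edgeSet hfq
    rw [edgeSet_deleteEdges] at this
    exact this.2 rfl
  set q' := (q.transfer M hq).toPath with hq'
  have hfq' : f ∉ (q' : M.Walk u v).edges := by
    intro hmem
    have := Walk.edges_toPath_subset _ hmem
    rw [Walk.edges_transfer] at this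
    exact hfq this
  have := hac.path_unique ⟨p, hp⟩ q'
  rw [← this] at hfq'
  exact hfq' hf

/-- Swapping an edge of a tree for an edge crossing the induced cut yields a tree. -/
lemma swap_isTree_aux {V : Type*} {T1 : SimpleGraph V} (hT1 : T1.IsTree)
    {u v a b : V} (hab : a ≠ b)
    (he : s(u,v) ∈ T1.edgeSet) (hf : s(a,b) ∉ T1.edgeSet)
    (hra : (T1.deleteEdges {s(u,v)}).Reachable u a)
    (hrb : (T1.deleteEdges {s(u,v)}).Reachable v b) :
    (fromEdgeSet (insert s(a,b) T1.edgeSet \ {s(u,v)})).IsTree := by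
  set H := T1.deleteEdges {s(u,v)} with hHdef
  set A := fromEdgeSet (insert s(a,b) T1.edgeSet \ {s(u,v)}) with hAdef
  have hfe : s(a,b) ≠ s(u,v) := fun h => hf (h ▸ he)
  have hHA : H ≤ A := by
    intro x y hxy
    rw [hHdef, deleteEdges_adj] at hxy
    rw [hAdef, fromEdgeSet_adj]
    exact ⟨⟨Set.mem_insert_of_mem _ hxy.1, by simpa using hxy.2⟩, hxy.1.ne⟩
  have hAab : A.Adj a b := by
    rw [hAdef, fromEdgeSet_adj]
    exact ⟨⟨Set.mem_insert _ _, by simpa using hfe⟩, hab⟩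
  have hnuv : ¬ H.Reachable u v := by
    have hbr := (isAcyclic_iff_forall_adj_isBridge.mp hT1.IsAcyclic) he
    rw [isBridge_iff] at hbr
    exact hbr
  have hAuv : A.Reachable u v :=
    ((hra.mono hHA).trans hAab.reachable).trans ((hrb.mono hHA).symm)
  have hside : ∀ x, H.Reachable x u ∨ H.Reachable x v :=
    all_side_aux hT1.isConnected u v
  have hconn : A.Connected := by
    have hAx : ∀ x, A.Reachable x u := by
      intro x
      rcases hside x with h1 | h1
      · exact h1.mono hHA
      · exact (h1.mono hHA).trans hAuv.symm
    have : Nonempty V := hT1.isConnected.nonempty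
    exact Connected.mk fun x y => (hAx x).trans (hAx y).symm
  have hac : A.IsAcyclic := by
    intro x c hc
    by_cases hfc : s(a,b) ∈ c.edges
    · have hreach : (A \ fromEdgeSet {s(a,b)}).Reachable a b :=
        (adj_and_reachable_delete_edges_iff_exists_cycle.mpr ⟨x, c, hc, hfc⟩).2
      have hle : (A \ fromEdgeSet {s(a,b)}) ≤ H := by
        intro p q hpq
        rw [sdiff_adj] at hpq
        obtain ⟨hpq1, hpq2⟩ := hpq
        rw [hAdef, fromEdgeSet_adj] at hpq1
        rw [fromEdgeSet_adj] at hpq2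
        have hne : s(p,q) ≠ s(a,b) := by
          intro hsame
          exact hpq2 ⟨by simp [hsame], hpq1.2⟩
        have hmem : s(p,q) ∈ T1.edgeSet := by
          rcases hpq1.1.1 with h1 | h1
          · exact absurd h1 hne
          · exact h1
        rw [hHdef, deleteEdges_adj]
        exact ⟨hmem, by simpa using hpq1.1.2⟩
      have : H.Reachable u v := (hra.trans (hreach.mono hle)).trans hrb.symm
      exact hnuv this
    · have hsub : ∀ g ∈ c.edges, g ∈ T1.edgeSet := by
        intro g hg
        have := c.edges_subset_edgeSet hg
        rw [hAdef, edgeSet_fromEdgeSet] at this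
        rcases this.1.1 with h1 | h1
        · exact absurd (h1 ▸ hg) hfc
        · exact h1
      exact hT1.IsAcyclic _ (hc.transfer hsub)
  exact ⟨hconn, hac⟩

/-- `treeWeight` as a sum over any finset describing the edge set
(instance-agnostic). -/
lemma treeWeight_sum {V : Type*} [Fintype V] (A : SimpleGraph V) (w : Sym2 V → ℝ)
    (s : Finset (Sym2 V)) (h : ∀ g, g ∈ s ↔ g ∈ A.edgeSet) :
    treeWeight A w = ∑ e ∈ s, w e := by
  rw [treeWeight]
  apply Finset.sum_congr _ fun x _ => rfl
  ext g
  rw [mem_edgeFinset, h]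

end Aux

/-- The number of edges of the minimum spanning tree `M` not in the spanning tree
`T` equals the number of edges of `T` not in `M`, and every edge of `T \ M`
participates in a violated swap constraint (a swap `(e,f)` with `w f < w e`). -/
theorem mst_symmetric_difference {V : Type*} [Fintype V] [DecidableEq V]
    (G T M : SimpleGraph V) (w : Sym2 V → ℝ)
    (hw : ∀ e ∈ G.edgeSet, ∀ f ∈ G.edgeSet, w e = w f → e = f)
    (hG : G.Connected) (hT : IsSpanningTree G T)
    (hM : IsSpanningTree G M ∧
      ∀ T' : SimpleGraph V, IsSpanningTree G T' → treeWeight M w ≤ treeWeight T' w) :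
    (M.edgeFinset \ T.edgeFinset).card = (T.edgeFinset \ M.edgeFinset).card ∧
    ∀ e ∈ T.edgeFinset \ M.edgeFinset, ∃ f : Sym2 V, IsSwap G T e f ∧ w f < w e := by
  obtain ⟨⟨hMle, hMtree⟩, hMmin⟩ := hM
  obtain ⟨hTle, hTtree⟩ := hT
  constructor
  · -- cardinality part
    have hTc : T.edgeFinset.card + 1 = Fintype.card V := hTtree.card_edgeFinset
    have hMc : M.edgeFinset.card + 1 = Fintype.card V := hMtree.card_edgeFinset
    have h1 := Finset.card_sdiff_add_card_inter M.edgeFinset T.edgeFinset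
    have h2 := Finset.card_sdiff_add_card_inter T.edgeFinset M.edgeFinset
    rw [Finset.inter_comm] at h2
    omega
  · intro e he
    rw [Finset.mem_sdiff, mem_edgeFinset, mem_edgeFinset] at he
    revert he
    induction e using Sym2.ind with
    | _ u v =>
    intro he
    obtain ⟨heT, heM⟩ := he
    have huv : u ≠ v := ((mem_edgeSet T).mp heT).ne
    have heG : s(u,v) ∈ G.edgeSet := edgeSet_mono hTle heT
    set H := T.deleteEdges {s(u,v)} with hHdef
    -- the deleted edge is a bridge of T
    have hnuvH : ¬ H.Reachable u v := by
      have hbr := (isAcyclic_iff_forall_adj_isBridge.mp hTtree.IsAcyclic)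
        ((mem_edgeSet T).mp heT)
      rw [isBridge_iff] at hbr
      exact hbr
    have hsideH : ∀ z, H.Reachable u z ∨ H.Reachable v z := by
      intro z
      rcases all_side_aux hTtree.isConnected u v z with h1 | h1
      · exact Or.inl h1.symm
      · exact Or.inr h1.symm
    -- a path in M from u to v
    obtain ⟨p0⟩ := hMtree.isConnected u v
    obtain ⟨a, b, hab, hua, hvb, hmem⟩ :=
      exists_cross_aux hnuvH hsideH (p0.toPath : M.Walk u v)
        (Reachable.refl u) (Reachable.refl v)
    have hfM : s(a,b) ∈ M.edgeSet := hab
    have hfG : s(a,b) ∈ G.edgeSet := edgeSet_mono hMle hfM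
    have hfe : s(a,b) ≠ s(u,v) := fun h => heM (h ▸ hfM)
    have hfT : s(a,b) ∉ T.edgeSet := by
      intro hfT
      have hadjH : H.Adj a b := by
        rw [hHdef, deleteEdges_adj]
        exact ⟨(mem_edgeSet T).mp hfT, by simpa using hfe⟩
      exact hnuvH ((hua.trans hadjH.reachable).trans hvb.symm)
    -- the new spanning tree T - e + f
    have hT'tree : (fromEdgeSet (insert s(a,b) T.edgeSet \ {s(u,v)})).IsTree :=
      swap_isTree_aux hTtree hab.ne heT hfT hua hvb
    have hT'le : fromEdgeSet (insert s(a,b) T.edgeSet \ {s(u,v)}) ≤ G := by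
      intro x y hxy
      rw [fromEdgeSet_adj] at hxy
      rcases hxy.1.1 with h1 | h1
      · exact (mem_edgeSet G).mp (by rw [h1]; exact hfG)
      · exact hTle ((mem_edgeSet T).mp h1)
    refine ⟨s(a,b), ⟨heT, hfG, hfT, hT'le, hT'tree⟩, ?_⟩
    -- now the weight comparison via M - f + e
    set K := M.deleteEdges {s(a,b)} with hKdef
    have hnabK : ¬ K.Reachable a b := by
      have hbr := (isAcyclic_iff_forall_adj_isBridge.mp hMtree.IsAcyclic) hab
      rw [isBridge_iff] at hbr
      exact hbr
    have hnuvK : ¬ K.Reachable u v :=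
      not_reachable_delete_of_mem_path_aux hMtree.IsAcyclic p0.toPath.isPath hmem
    have hKu := all_side_aux hMtree.isConnected a b u
    have hKv := all_side_aux hMtree.isConnected a b v
    rw [← hKdef] at hKu hKv
    have hM'tree : (fromEdgeSet (insert s(u,v) M.edgeSet \ {s(a,b)})).IsTree := by
      rcases hKu with h1 | h1 <;> rcases hKv with h2 | h2
      · exact absurd (h1.trans h2.symm) hnuvK
      · exact swap_isTree_aux hMtree huv hfM heM h1.symm h2.symm
      · have h1' : (M.deleteEdges {s(b,a)}).Reachable b u := by
          rw [show s(b,a) = s(a,b) from Sym2.eq_swap]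
          exact h1.symm
        have h2' : (M.deleteEdges {s(b,a)}).Reachable a v := by
          rw [show s(b,a) = s(a,b) from Sym2.eq_swap]
          exact h2.symm
        have hfM' : s(b,a) ∈ M.edgeSet := by
          rw [show s(b,a) = s(a,b) from Sym2.eq_swap]
          exact hfM
        have ht := swap_isTree_aux hMtree huv hfM' heM h1' h2'
        rw [show s(a,b) = s(b,a) from Sym2.eq_swap]
        exact ht
      · exact absurd (h1.trans h2.symm) hnuvK
    have hM'le : fromEdgeSet (insert s(u,v) M.edgeSet \ {s(a,b)}) ≤ G := by
      intro x y hxy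
      rw [fromEdgeSet_adj] at hxy
      rcases hxy.1.1 with h1 | h1
      · exact (mem_edgeSet G).mp (by rw [h1]; exact heG)
      · exact hMle ((mem_edgeSet M).mp h1)
    have hmin := hMmin _ ⟨hM'le, hM'tree⟩
    -- compute the weight of M'
    have hfMF : s(a,b) ∈ M.edgeFinset := mem_edgeFinset.mpr hfM
    have heMF : s(u,v) ∉ M.edgeFinset := fun h => heM (mem_edgeFinset.mp h)
    have hWM : treeWeight M w = ∑ e ∈ M.edgeFinset, w e :=
      treeWeight_sum M w _ (fun g => mem_edgeFinset)
    have hWM' : treeWeight (fromEdgeSet (insert s(u,v) M.edgeSet \ {s(a,b)})) w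
        = ∑ e ∈ insert s(u,v) M.edgeFinset \ {s(a,b)}, w e := by
      apply treeWeight_sum
      intro g
      simp only [Finset.mem_sdiff, Finset.mem_insert, Finset.mem_singleton, mem_edgeFinset,
        edgeSet_fromEdgeSet, Set.mem_diff, Set.mem_insert_iff, Set.mem_singleton_iff,
        Set.mem_setOf_eq]
      constructor
      · rintro ⟨h1, h2⟩
        refine ⟨⟨h1, h2⟩, ?_⟩
        rcases h1 with rfl | h1
        · simpa using huv
        · exact M.not_isDiag_of_mem_edgeSet h1
      · rintro ⟨⟨h1, h2⟩, _⟩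
        exact ⟨h1, h2⟩
    have hsum : ∑ e ∈ insert s(u,v) M.edgeFinset \ {s(a,b)}, w e
        = (∑ e ∈ M.edgeFinset, w e) + w s(u,v) - w s(a,b) := by
      rw [Finset.sum_sdiff_eq_sub (by simp [hfMF]), Finset.sum_insert heMF,
        Finset.sum_singleton]
      ring
    rw [hWM', hsum, ← hWM] at hmin
    have hle : w s(a,b) ≤ w s(u,v) := by linarith
    have hne : w s(a,b) ≠ w s(u,v) := fun h => hfe (hw _ hfG _ heG h)
    exact lt_of_le_of_ne hle hne
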